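/- The GDP predictive probabilities form a probability distribution: for any partition of n items into k nonempty clusters of sizes N_1, ..., N_k (∑_j N_j = n) and parameters α > 1, β ∈ (0,1), the quantities p_j = ((αβ + N_j - 1)/(α + n - 1)) ∏_{ℓ=1}^{j-1} A_ℓ for j = 1,...,k, and p_{k+1} = (α(1-β)/(α+n-1)) ∏_{ℓ=1}^{k-1} A_ℓ, where A_ℓ = (α(1-β) + S_ℓ)/(α + S_ℓ - 1) and S_ℓ = ∑_{m=ℓ+1}^k N_m, are nonnegative and sum to 1. -/

import Mathlib

open Finset

/-- The GDP predictive probabilities form a probability distribution. Clusters are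
0-indexed: `N j` for `j < k` are the cluster sizes, `S ℓ = ∑_{m=ℓ+1}^{k} N m`
(0-indexed: `∑_{m ∈ Ico (ℓ+1) k} N m`), `A ℓ = (α(1-β)+S ℓ)/(α+S ℓ-1)`. -/
theorem gdp_predictive_is_probability
    (α β : ℝ) (hα : 1 < α) (hβ : β ∈ Set.Ioo (0:ℝ) 1)
    (k : ℕ) (hk : 1 ≤ k) (N : ℕ → ℕ) (hN : ∀ j < k, 1 ≤ N j)
    (n : ℕ) (hn : n = ∑ j ∈ range k, N j)
    (S : ℕ → ℝ) (hS : ∀ ℓ, S ℓ = ∑ m ∈ Ico (ℓ + 1) k, (N m : ℝ))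
    (A : ℕ → ℝ) (hA : ∀ ℓ, A ℓ = (α * (1 - β) + S ℓ) / (α + S ℓ - 1))
    (p : ℕ → ℝ)
    (hp : ∀ j < k, p j = (α * β + (N j : ℝ) - 1) / (α + (n : ℝ) - 1) *
      ∏ ℓ ∈ range j, A ℓ)
    (pnew : ℝ)
    (hpnew : pnew = α * (1 - β) / (α + (n : ℝ) - 1) * ∏ ℓ ∈ range (k - 1), A ℓ) :
    (∀ j < k, 0 ≤ p j ∧ p j ≤ 1) ∧ (0 ≤ pnew ∧ pnew ≤ 1) ∧
      (∑ j ∈ range k, p j) + pnew = 1 := by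
  obtain ⟨hβ0, hβ1⟩ := hβ
  have hD : (0:ℝ) < α + (n:ℝ) - 1 := by
    have : (0:ℝ) ≤ (n:ℝ) := Nat.cast_nonneg n
    linarith
  have hSnn : ∀ ℓ, 0 ≤ S ℓ := by
    intro ℓ; rw [hS]; positivity
  have hAnn : ∀ ℓ, 0 ≤ A ℓ := by
    intro ℓ; rw [hA]
    apply div_nonneg
    · nlinarith [hSnn ℓ]
    · linarith [hSnn ℓ]
  have hPnn : ∀ m, 0 ≤ ∏ ℓ ∈ range m, A ℓ :=
    fun m => Finset.prod_nonneg fun ℓ _ => hAnn ℓ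
  have hpnn : ∀ j < k, 0 ≤ p j := by
    intro j hj
    rw [hp j hj]
    apply mul_nonneg _ (hPnn j)
    apply div_nonneg _ (le_of_lt hD)
    have : (1:ℝ) ≤ (N j : ℝ) := by exact_mod_cast hN j hj
    nlinarith
  have hpnewnn : 0 ≤ pnew := by
    rw [hpnew]
    apply mul_nonneg _ (hPnn _)
    apply div_nonneg _ (le_of_lt hD)
    nlinarith
  have key : ∀ m, m < k → ∑ j ∈ range (m+1), p j =
      1 - (α * (1 - β) + S m) / (α + (n:ℝ) - 1) * ∏ ℓ ∈ range m, A ℓ := by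
    intro m
    induction m with
    | zero =>
      intro h0
      have hn0 : (n:ℝ) = (N 0 : ℝ) + S 0 := by
        rw [hS, hn]
        push_cast
        rw [Finset.range_eq_Ico, Finset.sum_eq_sum_Ico_succ_bot h0]
      rw [Finset.sum_range_one, hp 0 h0]
      simp only [Finset.prod_range_zero, Finset.range_zero, Finset.prod_empty, mul_one]
      field_simp
      linarith
    | succ m ih =>
      intro h
      have hm : m < k := Nat.lt_of_succ_lt h
      have hSrec : S m = (N (m+1) : ℝ) + S (m+1) := by
        rw [hS m, hS (m+1), Finset.sum_eq_sum_Ico_succ_bot h]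
      have hdm : (0:ℝ) < α + S m - 1 := by linarith [hSnn m]
      have hAm : A m * (α + S m - 1) = α * (1 - β) + S m := by
        rw [hA]; field_simp
      rw [Finset.sum_range_succ, ih hm, hp (m+1) h, Finset.prod_range_succ, ← hAm]
      linear_combination (-(∏ ℓ ∈ range m, A ℓ) * A m / (α + (n:ℝ) - 1)) * hSrec
  have hk1 : k - 1 < k := Nat.sub_lt hk one_pos
  have hkeq : k - 1 + 1 = k := Nat.succ_pred_eq_of_pos hk
  have hSk : S (k-1) = 0 := by
    rw [hS, hkeq]; simp
  have hsum : ∑ j ∈ range k, p j =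
      1 - α * (1 - β) / (α + (n:ℝ) - 1) * ∏ ℓ ∈ range (k-1), A ℓ := by
    have := key (k-1) hk1
    rw [hkeq] at this
    rw [this, hSk, add_zero]
  have htotal : (∑ j ∈ range k, p j) + pnew = 1 := by
    rw [hsum, hpnew]; ring
  have hsumnn : ∀ j < k, p j ≤ 1 := by
    intro j hj
    have h1 : p j ≤ ∑ i ∈ range k, p i :=
      Finset.single_le_sum (fun i hi => hpnn i (Finset.mem_range.mp hi))
        (Finset.mem_range.mpr hj)
    linarith
  refine ⟨fun j hj => ⟨hpnn j hj, hsumnn j hj⟩, ⟨hpnewnn, ?_⟩, htotal⟩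
  have h1 : 0 ≤ ∑ j ∈ range k, p j :=
    Finset.sum_nonneg fun i hi => hpnn i (Finset.mem_range.mp hi)
  linarith
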